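/- Let P, Q be symmetric positive definite n×n real matrices and A_K an n×n real matrix satisfying the discrete Lyapunov equation A_Kᵀ P A_K − P + Q = 0. Then for every θ ∈ (0,1), every x ∈ ℝⁿ, every p×n-appropriate matrix G and every r ∈ ℝ^p, with V(x) = xᵀ P x, one has V(A_K x + G r) ≤ V(x) − (1−θ)·xᵀQx + c₂‖r‖², where c₂ = λ_max(Gᵀ P G) + ‖Gᵀ P A_K‖² / (θ λ_min(Q)). -/

import Mathlib

open Matrix

/-- The linear map on Euclidean spaces induced by a matrix. -/
noncomputable def elin {m p : ℕ} (M : Matrix (Fin m) (Fin p) ℝ) :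
    EuclideanSpace ℝ (Fin p) →ₗ[ℝ] EuclideanSpace ℝ (Fin m) := Matrix.toEuclideanLin M

/-- The (Euclidean) operator norm of a matrix. -/
noncomputable def opNorm {m p : ℕ} (M : Matrix (Fin m) (Fin p) ℝ) : ℝ :=
  ‖LinearMap.toContinuousLinearMap (elin M)‖

lemma elin_mul {m q s : ℕ} (M : Matrix (Fin m) (Fin q) ℝ) (N : Matrix (Fin q) (Fin s) ℝ)
    (v : EuclideanSpace ℝ (Fin s)) : elin (M * N) v = elin M (elin N v) := by
  simp [elin, Matrix.toEuclideanLin_apply, Matrix.mulVec_mulVec]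

lemma inner_elin_left {m q : ℕ} (M : Matrix (Fin m) (Fin q) ℝ) (v : EuclideanSpace ℝ (Fin q))
    (w : EuclideanSpace ℝ (Fin m)) : (inner ℝ (elin M v) w : ℝ) = inner ℝ v (elin Mᵀ w) := by
  simp only [elin, Matrix.toEuclideanLin_apply, PiLp.inner_apply, RCLike.inner_apply,
    starRingEnd_apply, star_trivial]
  simp only [Matrix.mulVec,
    dotProduct, Matrix.transpose_apply, Finset.sum_mul, Finset.mul_sum]
  rw [Finset.sum_comm]
  apply Finset.sum_congr rfl; intros; apply Finset.sum_congr rfl; intros; ring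

lemma elin_eigenvector {n : ℕ} {M : Matrix (Fin n) (Fin n) ℝ} (hM : M.IsHermitian) (i : Fin n) :
    elin M (hM.eigenvectorBasis i) = hM.eigenvalues i • hM.eigenvectorBasis i := by
  apply (WithLp.equiv 2 (Fin n → ℝ)).injective
  simp only [elin, Matrix.piLp_ofLp_toEuclideanLin]
  have := hM.mulVec_eigenvectorBasis i
  simpa using this

lemma inner_elin_eq_sum {n : ℕ} {M : Matrix (Fin n) (Fin n) ℝ} (hM : M.IsHermitian)
    (v : EuclideanSpace ℝ (Fin n)) :
    (inner ℝ v (elin M v) : ℝ) =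
      ∑ i, hM.eigenvalues i * (inner ℝ (hM.eigenvectorBasis i) v : ℝ) ^ 2 := by
  have hsym : (Matrix.toEuclideanLin M).IsSymmetric := Matrix.isHermitian_iff_isSymmetric.1 hM
  rw [← OrthonormalBasis.sum_inner_mul_inner hM.eigenvectorBasis v (elin M v)]
  apply Finset.sum_congr rfl
  intro i _
  have h1 : (inner ℝ (hM.eigenvectorBasis i) (elin M v) : ℝ)
      = inner ℝ (elin M (hM.eigenvectorBasis i)) v := (hsym _ _).symm
  rw [h1, elin_eigenvector hM i, real_inner_smul_left, real_inner_comm v]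
  ring

lemma norm_sq_eq_sum {n : ℕ} {M : Matrix (Fin n) (Fin n) ℝ} (hM : M.IsHermitian)
    (v : EuclideanSpace ℝ (Fin n)) :
    ‖v‖ ^ 2 = ∑ i, (inner ℝ (hM.eigenvectorBasis i) v : ℝ) ^ 2 := by
  rw [← real_inner_self_eq_norm_sq,
    ← OrthonormalBasis.sum_inner_mul_inner hM.eigenvectorBasis v v]
  apply Finset.sum_congr rfl
  intro i _
  rw [real_inner_comm v]; ring

lemma inner_elin_le_iSup {n : ℕ} {M : Matrix (Fin n) (Fin n) ℝ} (hM : M.IsHermitian)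
    (v : EuclideanSpace ℝ (Fin n)) :
    (inner ℝ v (elin M v) : ℝ) ≤ (⨆ i, hM.eigenvalues i) * ‖v‖ ^ 2 := by
  rw [inner_elin_eq_sum hM v, norm_sq_eq_sum hM v, Finset.mul_sum]
  apply Finset.sum_le_sum
  intro i _
  exact mul_le_mul_of_nonneg_right
    (le_ciSup (Set.Finite.bddAbove (Set.finite_range _)) i) (sq_nonneg _)

lemma iInf_le_inner_elin {n : ℕ} {M : Matrix (Fin n) (Fin n) ℝ} (hM : M.IsHermitian)
    (v : EuclideanSpace ℝ (Fin n)) :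
    (⨅ i, hM.eigenvalues i) * ‖v‖ ^ 2 ≤ (inner ℝ v (elin M v) : ℝ) := by
  rw [inner_elin_eq_sum hM v, norm_sq_eq_sum hM v, Finset.mul_sum]
  apply Finset.sum_le_sum
  intro i _
  exact mul_le_mul_of_nonneg_right
    (ciInf_le (Set.Finite.bddBelow (Set.finite_range _)) i) (sq_nonneg _)

lemma norm_elin_le {m q : ℕ} (M : Matrix (Fin m) (Fin q) ℝ) (v : EuclideanSpace ℝ (Fin q)) :
    ‖elin M v‖ ≤ opNorm M * ‖v‖ := by
  have := (LinearMap.toContinuousLinearMap (elin M)).le_opNorm v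
  simpa [opNorm] using this

theorem lyapunov_iss_decrease {n p : ℕ}
    (P Q A : Matrix (Fin n) (Fin n) ℝ) (G : Matrix (Fin n) (Fin p) ℝ)
    (hP : P.PosDef) (hQ : Q.PosDef)
    (hLyap : Aᵀ * P * A - P + Q = 0)
    (hGPG : (Gᵀ * P * G).IsHermitian)
    (θ : ℝ) (hθ : θ ∈ Set.Ioo (0 : ℝ) 1)
    (x : EuclideanSpace ℝ (Fin n)) (r : EuclideanSpace ℝ (Fin p)) :
    (inner ℝ (elin A x + elin G r) (elin P (elin A x + elin G r)) : ℝ) ≤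
      (inner ℝ x (elin P x) : ℝ) - (1 - θ) * (inner ℝ x (elin Q x) : ℝ)
        + ((⨆ i, hGPG.eigenvalues i)
            + opNorm (Gᵀ * P * A) ^ 2 / (θ * ⨅ i, hQ.1.eigenvalues i)) * ‖r‖ ^ 2 := by
  obtain ⟨hθ0, hθ1⟩ := hθ
  set u := elin A x with hu
  set w := elin G r with hw
  set c := opNorm (Gᵀ * P * A) with hc
  have hc0 : 0 ≤ c := norm_nonneg _
  have hPsym : (Matrix.toEuclideanLin P).IsSymmetric := Matrix.isHermitian_iff_isSymmetric.1 hP.1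
  have hsw : (inner ℝ u (elin P w) : ℝ) = inner ℝ w (elin P u) := by
    have h1 : (inner ℝ (elin P u) w : ℝ) = inner ℝ u (elin P w) := hPsym u w
    rw [← h1, real_inner_comm]
  have hexp : (inner ℝ (u + w) (elin P (u + w)) : ℝ)
      = inner ℝ u (elin P u) + 2 * (inner ℝ w (elin P u) : ℝ) + inner ℝ w (elin P w) := by
    rw [map_add, inner_add_left, inner_add_right, inner_add_right, hsw]
    ring
  have hAPA : Aᵀ * P * A = P - Q := by
    rw [sub_add_eq_add_sub, sub_eq_zero] at hLyap
    exact eq_sub_of_add_eq hLyap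
  have hT1 : (inner ℝ u (elin P u) : ℝ) = inner ℝ x (elin P x) - inner ℝ x (elin Q x) := by
    rw [hu, inner_elin_left, ← elin_mul, ← elin_mul, hAPA]
    have : elin (P - Q) x = elin P x - elin Q x := by
      simp [elin, map_sub]
    rw [this, inner_sub_right]
  have hT2 : (inner ℝ w (elin P u) : ℝ) = inner ℝ r (elin (Gᵀ * P * A) x) := by
    rw [hw, hu, inner_elin_left, ← elin_mul, ← elin_mul]
  have hT3 : (inner ℝ w (elin P w) : ℝ) = inner ℝ r (elin (Gᵀ * P * G) r) := by
    rw [hw, inner_elin_left, ← elin_mul, ← elin_mul]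
  have hT3le : (inner ℝ w (elin P w) : ℝ) ≤ (⨆ i, hGPG.eigenvalues i) * ‖r‖ ^ 2 := by
    rw [hT3]; exact inner_elin_le_iSup hGPG r
  have hT2le : (inner ℝ w (elin P u) : ℝ) ≤ c * ‖x‖ * ‖r‖ := by
    rw [hT2]
    calc (inner ℝ r (elin (Gᵀ * P * A) x) : ℝ) ≤ ‖r‖ * ‖elin (Gᵀ * P * A) x‖ :=
          real_inner_le_norm r _
      _ ≤ ‖r‖ * (c * ‖x‖) :=
          mul_le_mul_of_nonneg_left (norm_elin_le _ x) (norm_nonneg r)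
      _ = c * ‖x‖ * ‖r‖ := by ring
  rcases Nat.eq_zero_or_pos n with hn | hn
  · subst hn
    have he : IsEmpty (Fin 0) := inferInstance
    have hx0 : ∀ v₁ v₂ : EuclideanSpace ℝ (Fin 0), (inner ℝ v₁ v₂ : ℝ) = 0 := by
      intro v₁ v₂
      rw [PiLp.inner_apply]
      exact Finset.sum_of_isEmpty _
    have hinf : (⨅ i, hQ.1.eigenvalues i) = 0 := by
      rw [iInf_of_isEmpty, Real.sInf_empty]
    have hG0 : Gᵀ * P * G = 0 := by
      ext i j
      simp [Matrix.mul_apply]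
    have heig : ∀ i, hGPG.eigenvalues i = 0 := by
      intro i
      rw [hGPG.eigenvalues_eq]
      simp [hG0]
    have hsup : (⨆ i, hGPG.eigenvalues i) = 0 := by
      rcases isEmpty_or_nonempty (Fin p) with hp | hp
      · exact Real.iSup_of_isEmpty _
      · simp only [heig]
        exact ciSup_const
    rw [hexp, hx0 u, hx0 x, hx0 x, hx0 w, hx0 w, hinf, hsup]
    norm_num
  · have hne : Nonempty (Fin n) := Fin.pos_iff_nonempty.mp hn
    set lam := ⨅ i, hQ.1.eigenvalues i with hlam
    have hlam0 : 0 < lam := by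
      obtain ⟨i, hi⟩ := exists_eq_ciInf_of_finite (f := hQ.1.eigenvalues)
      rw [hlam, ← hi]
      exact hQ.eigenvalues_pos i
    have hεpos : 0 < θ * lam := mul_pos hθ0 hlam0
    have hQlow : θ * lam * ‖x‖ ^ 2 ≤ θ * (inner ℝ x (elin Q x) : ℝ) := by
      rw [mul_assoc]
      exact mul_le_mul_of_nonneg_left (iInf_le_inner_elin hQ.1 x) hθ0.le
    have young : 2 * (c * ‖x‖ * ‖r‖) ≤ θ * lam * ‖x‖ ^ 2 + c ^ 2 * ‖r‖ ^ 2 / (θ * lam) := by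
      have key : 2 * (c * ‖x‖ * ‖r‖) * (θ * lam) ≤ (θ * lam * ‖x‖) ^ 2 + (c * ‖r‖) ^ 2 := by
        nlinarith [sq_nonneg (θ * lam * ‖x‖ - c * ‖r‖)]
      rw [← sub_nonneg]
      have expand : θ * lam * ‖x‖ ^ 2 + c ^ 2 * ‖r‖ ^ 2 / (θ * lam) - 2 * (c * ‖x‖ * ‖r‖)
          = ((θ * lam * ‖x‖) ^ 2 + (c * ‖r‖) ^ 2 - 2 * (c * ‖x‖ * ‖r‖) * (θ * lam)) / (θ * lam) := by
        field_simp
      rw [expand]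
      exact div_nonneg (by linarith) hεpos.le
    have hring : ((⨆ i, hGPG.eigenvalues i) + c ^ 2 / (θ * lam)) * ‖r‖ ^ 2
        = (⨆ i, hGPG.eigenvalues i) * ‖r‖ ^ 2 + c ^ 2 * ‖r‖ ^ 2 / (θ * lam) := by ring
    rw [hexp, hT1]
    linarith [hT2le, hT3le, young, hQlow, hring]
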